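/- Let m ≥ 1, let A be an m×m complex matrix, and let t ≥ 0. Then ‖exp(tA)‖ ≤ ρ(exp(tA)) · (1 + Σ_{k=1}^{m−1} (2t)^k / k! · ‖A‖^k), where the sum over an empty range (m = 1) is 0. -/

import Mathlib

open scoped Matrix.Norms.L2Operator

open scoped InnerProductSpace
open Module

lemma schur_basis : ∀ (n : ℕ) (E : Type) [NormedAddCommGroup E] [InnerProductSpace ℂ E]
    [FiniteDimensional ℂ E], finrank ℂ E = n → ∀ f : E →ₗ[ℂ] E,
    ∃ b : OrthonormalBasis (Fin n) ℂ E, ∀ i j : Fin n, j < i → ⟪b i, f (b j)⟫_ℂ = 0 := by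
  intro n
  induction n with
  | zero =>
    intro E _ _ _ hn f
    have hsub : Subsingleton E := by
      rw [← finrank_zero_iff (R := ℂ)]; omega
    refine ⟨OrthonormalBasis.mk (v := fun i : Fin 0 => (0 : E))
      ⟨fun i => i.elim0, fun i => i.elim0⟩ ?_, fun i => i.elim0⟩
    intro x _
    have : x = 0 := Subsingleton.elim x 0
    simp [this]
  | succ n ih =>
    intro E _ _ _ hn f
    haveI : Fact (finrank ℂ E = n + 1) := ⟨hn⟩
    have hnt : Nontrivial E := by
      exact Module.nontrivial_of_finrank_eq_succ hn
    obtain ⟨c, hc⟩ := Module.End.exists_eigenvalue (LinearMap.adjoint f)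
    obtain ⟨v0, hv0⟩ := hc.exists_hasEigenvector
    have hv0ne : v0 ≠ 0 := hv0.right
    set v : E := (‖v0‖ : ℂ)⁻¹ • v0 with hv
    have hvnorm : ‖v‖ = 1 := by
      rw [hv, norm_smul]
      simp [norm_inv, hv0ne, norm_ne_zero_iff.mpr hv0ne]
    have hvne : v ≠ 0 := by
      intro h; rw [h] at hvnorm; simp at hvnorm
    have hveig : LinearMap.adjoint f v = c • v := by
      rw [hv, map_smul, hv0.apply_eq_smul, smul_comm]
    set W : Submodule ℂ E := (ℂ ∙ v)ᗮ with hW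
    have hWrank : finrank ℂ W = n := Submodule.finrank_orthogonal_span_singleton hvne
    have hWinv : ∀ x ∈ W, f x ∈ W := by
      intro x hx
      rw [hW, Submodule.mem_orthogonal_singleton_iff_inner_right]
      calc ⟪v, f x⟫_ℂ = ⟪LinearMap.adjoint f v, x⟫_ℂ := (LinearMap.adjoint_inner_left f x v).symm
      _ = (starRingEnd ℂ) c * ⟪v, x⟫_ℂ := by rw [hveig, inner_smul_left]
      _ = 0 := by
        rw [Submodule.mem_orthogonal_singleton_iff_inner_right.mp hx, mul_zero]
    obtain ⟨b', hb'⟩ := ih W hWrank (f.restrict hWinv)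
    set bfun : Fin (n + 1) → E := Fin.snoc (fun i => (b' i : E)) v with hbfun
    have hbW : ∀ i : Fin n, ((b' i : E)) ∈ W := fun i => (b' i).2
    have hon : Orthonormal ℂ bfun := by
      rw [orthonormal_iff_ite]
      intro i j
      refine Fin.lastCases ?_ ?_ i <;> [skip; intro i'] <;>
        (refine Fin.lastCases ?_ ?_ j <;> [skip; intro j'])
      · simp only [hbfun, Fin.snoc_last, if_pos rfl]
        rw [@inner_self_eq_norm_sq_to_K ℂ]
        rw [hvnorm]; norm_num
      · simp only [hbfun, Fin.snoc_last, Fin.snoc_castSucc]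
        rw [if_neg (by simp [Fin.ext_iff]; omega)]
        have := Submodule.mem_orthogonal_singleton_iff_inner_right.mp (hbW j')
        exact this
      · simp only [hbfun, Fin.snoc_last, Fin.snoc_castSucc]
        rw [if_neg (by simp [Fin.ext_iff]; omega)]
        rw [← inner_conj_symm]
        rw [Submodule.mem_orthogonal_singleton_iff_inner_right.mp (hbW i')]
        simp
      · simp only [hbfun, Fin.snoc_castSucc]
        have := orthonormal_iff_ite.mp b'.orthonormal i' j'
        rw [← Submodule.coe_inner W (b' i') (b' j')]
        rw [this]
        simp [Fin.ext_iff]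
    have hspan : ⊤ ≤ Submodule.span ℂ (Set.range bfun) := by
      have hr : Set.range bfun = (Subtype.val '' Set.range b') ∪ {v} := by
        rw [hbfun]
        ext x
        simp only [Set.mem_union, Set.mem_image, Set.mem_range, Set.mem_singleton_iff]
        constructor
        · rintro ⟨i, rfl⟩
          refine Fin.lastCases ?_ ?_ i
          · right; simp [Fin.snoc_last]
          · intro i'; left; exact ⟨b' i', ⟨i', rfl⟩, by simp [Fin.snoc_castSucc]⟩
        · rintro (⟨y, ⟨i, rfl⟩, rfl⟩ | rfl)
          · exact ⟨i.castSucc, by simp [Fin.snoc_castSucc]⟩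
          · exact ⟨Fin.last n, by simp [Fin.snoc_last]⟩
      rw [hr, Submodule.span_union]
      have h1 : Submodule.span ℂ (Subtype.val '' Set.range b') = W := by
        rw [show (Subtype.val '' Set.range ⇑b') = (⇑W.subtype '' Set.range ⇑b') from rfl,
          Submodule.span_image]
        have : Submodule.span ℂ (Set.range ⇑b') = ⊤ := by
          have := b'.toBasis.span_eq
          rwa [b'.coe_toBasis] at this
        rw [this, Submodule.map_subtype_top]
      have h2 : Submodule.span ℂ ({v} : Set E) = ℂ ∙ v := rfl
      rw [h1, h2, hW, sup_comm]
      rw [Submodule.sup_orthogonal_of_hasOrthogonalProjection]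
    refine ⟨OrthonormalBasis.mk hon hspan, ?_⟩
    intro i j hij
    rw [OrthonormalBasis.coe_mk]
    have hjne : j ≠ Fin.last n := by
      intro h
      have : i ≤ Fin.last n := Fin.le_last i
      rw [h] at hij; exact absurd (lt_of_lt_of_le hij this) (lt_irrefl _)
    obtain ⟨j', rfl⟩ := Fin.exists_castSucc_eq.mpr hjne
    have hbj : bfun j'.castSucc = (b' j' : E) := by simp [hbfun, Fin.snoc_castSucc]
    rcases Fin.eq_castSucc_or_eq_last i with ⟨i', rfl⟩ | rfl
    · have hbi : bfun i'.castSucc = (b' i' : E) := by simp [hbfun, Fin.snoc_castSucc]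
      rw [hbi, hbj]
      have hij' : j' < i' := by
        simpa [Fin.castSucc_lt_castSucc_iff] using hij
      exact hb' i' j' hij'
    · rw [hbj]
      have hlast : bfun (Fin.last n) = v := by simp [hbfun, Fin.snoc_last]
      rw [hlast]
      have hmem : f (b' j' : E) ∈ W := hWinv _ (hbW j')
      exact Submodule.mem_orthogonal_singleton_iff_inner_right.mp hmem

lemma schur_matrix (m : ℕ) (A : Matrix (Fin m) (Fin m) ℂ) :
    ∃ U ∈ Matrix.unitaryGroup (Fin m) ℂ, ∃ T : Matrix (Fin m) (Fin m) ℂ,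
      A = U * T * star U ∧ T.BlockTriangular (id : Fin m → Fin m) := by
  have hrank : finrank ℂ (EuclideanSpace ℂ (Fin m)) = m := by
    simp [finrank_euclideanSpace]
  obtain ⟨b, hb⟩ := schur_basis m (EuclideanSpace ℂ (Fin m)) hrank (Matrix.toEuclideanLin A)
  set U : Matrix (Fin m) (Fin m) ℂ := (EuclideanSpace.basisFun (Fin m) ℂ).toBasis.toMatrix b.toBasis
    with hUdef
  have hU : U ∈ Matrix.unitaryGroup (Fin m) ℂ :=
    (EuclideanSpace.basisFun (Fin m) ℂ).toMatrix_orthonormalBasis_mem_unitary b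
  have hUapp : ∀ i j, U i j = b j i := fun i j => rfl
  set T : Matrix (Fin m) (Fin m) ℂ := star U * A * U with hTdef
  have hT : ∀ i j, T i j = ⟪b i, Matrix.toEuclideanLin A (b j)⟫_ℂ := by
    intro i j
    rw [hTdef]
    rw [Matrix.mul_apply]
    simp only [Matrix.mul_apply, Matrix.star_apply, hUapp]
    rw [PiLp.inner_apply]
    simp only [Matrix.toEuclideanLin_apply, RCLike.inner_apply]
    simp only [Matrix.mulVec, dotProduct]
    simp only [Finset.sum_mul, Finset.mul_sum]
    rw [Finset.sum_comm]
    refine Finset.sum_congr rfl fun p _ => ?_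
    refine Finset.sum_congr rfl fun q _ => ?_
    rw [mul_assoc]
    exact mul_comm _ _
  refine ⟨U, hU, T, ?_, ?_⟩
  · rw [hTdef, ← Matrix.mul_assoc, ← Matrix.mul_assoc]
    have h1 : U * star U = 1 := Matrix.mem_unitaryGroup_iff.mp hU
    have h2 : star U * U = 1 := Matrix.mem_unitaryGroup_iff'.mp hU
    have key : U * T * star U = A := by
      rw [hTdef]
      simp only [Matrix.mul_assoc]
      rw [h1, Matrix.mul_one, ← Matrix.mul_assoc, h1, Matrix.one_mul]
    simp only [hTdef, Matrix.mul_assoc] at key ⊢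
    exact key.symm
  · intro i j hij
    rw [hT]
    exact hb i j hij

open scoped Matrix.Norms.L2Operator
open NormedSpace (exp)

noncomputable instance instRatNormedAlgebraMat {m : ℕ} : NormedAlgebra ℚ (Matrix (Fin m) (Fin m) ℂ) :=
  { (inferInstance : Algebra ℚ (Matrix (Fin m) (Fin m) ℂ)) with
    norm_smul_le := fun q x => by
      rw [← algebraMap_smul ℂ q x, norm_smul]
      simp [← Rat.norm_cast_real] }

namespace ShilovAux
variable {m : ℕ}

/-- entries vanish below the k-th superdiagonal -/
def SupD (k : ℕ) (X : Matrix (Fin m) (Fin m) ℂ) : Prop :=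
  ∀ i j : Fin m, (j : ℕ) < (i : ℕ) + k → X i j = 0

lemma SupD.mul {a b : ℕ} {X Y : Matrix (Fin m) (Fin m) ℂ} (hX : SupD a X) (hY : SupD b Y) :
    SupD (a + b) (X * Y) := by
  intro i j hij
  rw [Matrix.mul_apply]
  apply Finset.sum_eq_zero
  intro p _
  by_cases hp : (p : ℕ) < (i : ℕ) + a
  · rw [hX i p hp, zero_mul]
  · rw [hY p j (by omega), mul_zero]

lemma SupD.diagonal (d : Fin m → ℂ) : SupD 0 (Matrix.diagonal d) := by
  intro i j hij
  exact Matrix.diagonal_apply_ne d (by omega : i ≠ j)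

lemma SupD.eq_zero {k : ℕ} {X : Matrix (Fin m) (Fin m) ℂ} (h : SupD k X) (hk : m ≤ k) :
    X = 0 := by
  ext i j
  exact h i j (by omega)

lemma SupD.mono {a b : ℕ} {X : Matrix (Fin m) (Fin m) ℂ} (h : SupD a X) (hba : b ≤ a) :
    SupD b X := fun i j hij => h i j (by omega)

/-- the entry evaluation as a continuous linear map over ℝ -/
noncomputable def entryCLM (i j : Fin m) : Matrix (Fin m) (Fin m) ℂ →L[ℝ] ℂ :=
  LinearMap.toContinuousLinearMap
    { toFun := fun X => X i j, map_add' := fun _ _ => rfl, map_smul' := fun _ _ => rfl }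

@[simp] lemma entryCLM_apply (i j : Fin m) (X : Matrix (Fin m) (Fin m) ℂ) :
    entryCLM i j X = X i j := rfl

lemma l2_norm_diagonal_le (d : Fin m → ℂ) {C : ℝ} (hC : 0 ≤ C) (h : ∀ i, ‖d i‖ ≤ C) :
    ‖Matrix.diagonal d‖ ≤ C := by
  rw [Matrix.l2_opNorm_def]
  refine ContinuousLinearMap.opNorm_le_bound _ hC fun x => ?_
  show ‖(Matrix.toEuclideanLin (Matrix.diagonal d)) x‖ ≤ C * ‖x‖
  set y : EuclideanSpace ℂ (Fin m) := (Matrix.toEuclideanLin (Matrix.diagonal d)) x with hy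
  have hyc : ∀ i, y i = d i * x i := by
    intro i
    show ((Matrix.diagonal d).mulVec _) i = _
    rw [Matrix.mulVec_diagonal]
    rfl
  have hx : ∀ z : EuclideanSpace ℂ (Fin m), ‖z‖ = Real.sqrt (∑ i, ‖z i‖ ^ 2) :=
    fun z => EuclideanSpace.norm_eq z
  rw [hx, hx]
  have hterm : ∀ i : Fin m, ‖y i‖ ^ 2 ≤ C ^ 2 * ‖x i‖ ^ 2 := by
    intro i
    rw [hyc i, ← mul_pow, norm_mul]
    exact pow_le_pow_left₀ (by positivity)
      (mul_le_mul_of_nonneg_right (h i) (norm_nonneg (x i))) 2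
  calc Real.sqrt (∑ i, ‖y i‖ ^ 2)
      ≤ Real.sqrt (∑ i, C ^ 2 * ‖x i‖ ^ 2) :=
        Real.sqrt_le_sqrt (Finset.sum_le_sum fun i _ => hterm i)
    _ = C * Real.sqrt (∑ i, ‖x i‖ ^ 2) := by
        rw [← Finset.mul_sum, Real.sqrt_mul (sq_nonneg C), Real.sqrt_sq hC]

lemma entry_le_l2_norm (X : Matrix (Fin m) (Fin m) ℂ) (i j : Fin m) : ‖X i j‖ ≤ ‖X‖ := by
  have key := Matrix.l2_opNorm_mulVec X (EuclideanSpace.single j (1 : ℂ))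
  rw [EuclideanSpace.norm_single, norm_one, mul_one] at key
  refine le_trans ?_ key
  set y : EuclideanSpace ℂ (Fin m) :=
    (EuclideanSpace.equiv (Fin m) ℂ).symm (X.mulVec (EuclideanSpace.single j (1 : ℂ))) with hy
  have hyi : y i = X i j := by
    show (X.mulVec _) i = X i j
    have : ((EuclideanSpace.single j (1 : ℂ)) : Fin m → ℂ) = Pi.single j 1 := rfl
    rw [show (EuclideanSpace.single j (1:ℂ) : Fin m → ℂ) = Pi.single j 1 from rfl]
    rw [Matrix.mulVec_single]
    exact mul_one _
  rw [← hyi]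
  rw [EuclideanSpace.norm_eq]
  have : ‖y i‖ = Real.sqrt (‖y i‖ ^ 2) := (Real.sqrt_sq (norm_nonneg _)).symm
  rw [this]
  refine Real.sqrt_le_sqrt ?_
  exact Finset.single_le_sum (fun k _ => sq_nonneg ‖y k‖) (Finset.mem_univ i)

/-- exp of a real multiple of a diagonal complex matrix -/
lemma exp_smul_diagonal (s : ℝ) (d : Fin m → ℂ) :
    exp (s • Matrix.diagonal d) = Matrix.diagonal (fun i => Complex.exp (s * d i)) := by
  have h1 : s • Matrix.diagonal d = Matrix.diagonal (fun i => s • d i) := by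
    ext i j
    by_cases h : i = j
    · subst h; simp
    · simp [Matrix.diagonal_apply_ne _ h]
  rw [h1, Matrix.exp_diagonal, Pi.exp_def]
  have : (fun i => exp (s • d i)) = fun i => Complex.exp (s * d i) := by
    funext i
    rw [Complex.real_smul, ← Complex.exp_eq_exp_ℂ]
  rw [this]

lemma norm_exp_smul_diagonal_le (s : ℝ) (hs : 0 ≤ s) (d : Fin m → ℂ) {α : ℝ}
    (hα : ∀ i, (d i).re ≤ α) : ‖exp (s • Matrix.diagonal d)‖ ≤ Real.exp (s * α) := by
  rw [exp_smul_diagonal]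
  refine l2_norm_diagonal_le _ (Real.exp_nonneg _) fun i => ?_
  rw [Complex.norm_exp]
  have : ((s : ℂ) * d i).re = s * (d i).re := by
    simp [Complex.mul_re]
  rw [this]
  exact Real.exp_le_exp.mpr (mul_le_mul_of_nonneg_left (hα i) hs)

/-- the Volterra iterates -/
noncomputable def Fit (D N : Matrix (Fin m) (Fin m) ℂ) : ℕ → ℝ → Matrix (Fin m) (Fin m) ℂ
  | 0 => fun s => exp (s • D)
  | (k+1) => fun s => exp (s • D) * ∫ u in (0:ℝ)..s, exp ((-u) • D) * N * Fit D N k u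

variable (D N : Matrix (Fin m) (Fin m) ℂ)

lemma continuous_exp_smul (X : Matrix (Fin m) (Fin m) ℂ) :
    Continuous fun s : ℝ => exp (s • X) :=
  NormedSpace.exp_continuous.comp (continuous_id.smul continuous_const)

lemma Fit_continuous (k : ℕ) : Continuous (Fit D N k) := by
  induction k with
  | zero => exact continuous_exp_smul D
  | succ k ih =>
    refine (continuous_exp_smul D).mul ?_
    refine intervalIntegral.continuous_primitive (fun a b => Continuous.intervalIntegrable ?_ a b) 0
    exact (((continuous_exp_smul D).comp continuous_neg).mul continuous_const).mul ih

lemma exp_smul_mul_exp_smul (a b : ℝ) (X : Matrix (Fin m) (Fin m) ℂ) :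
    exp (a • X) * exp (b • X) = exp ((a + b) • X) := by
  rw [add_smul, NormedSpace.exp_add_of_commute]
  exact (Commute.refl X).smul_left a |>.smul_right b

lemma exp_smul_comm (s : ℝ) (X : Matrix (Fin m) (Fin m) ℂ) :
    exp (s • X) * X = X * exp (s • X) :=
  (((Commute.refl X).smul_left s).exp_left).eq

lemma Fit_integrand_continuous (k : ℕ) :
    Continuous (fun u : ℝ => exp ((-u) • D) * N * Fit D N k u) :=
  (((continuous_exp_smul D).comp continuous_neg).mul continuous_const).mul (Fit_continuous D N k)

lemma Fit_hasDerivAt (k : ℕ) (s : ℝ) :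
    HasDerivAt (Fit D N (k+1)) (D * Fit D N (k+1) s + N * Fit D N k s) s := by
  have hg := Fit_integrand_continuous D N k
  have hG : HasDerivAt (fun s : ℝ => ∫ u in (0:ℝ)..s, exp ((-u) • D) * N * Fit D N k u)
      (exp ((-s) • D) * N * Fit D N k s) s := by
    refine intervalIntegral.integral_hasDerivAt_right (hg.intervalIntegrable 0 s)
      (hg.stronglyMeasurable.stronglyMeasurableAtFilter) hg.continuousAt
  have hE := hasDerivAt_exp_smul_const (𝕂 := ℝ) D s
  have hprod := hE.mul hG
  have heq : exp (s • D) * D * (∫ u in (0:ℝ)..s, exp ((-u) • D) * N * Fit D N k u) +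
      exp (s • D) * (exp ((-s) • D) * N * Fit D N k s) =
      D * Fit D N (k+1) s + N * Fit D N k s := by
    congr 1
    · rw [exp_smul_comm, mul_assoc]
      rfl
    · rw [show exp (s • D) * (exp ((-s) • D) * N * Fit D N k s) =
        (exp (s • D) * exp ((-s) • D)) * N * Fit D N k s by
          simp only [mul_assoc]]
      rw [exp_smul_mul_exp_smul, add_neg_cancel, zero_smul, NormedSpace.exp_zero, one_mul]
  exact heq ▸ hprod

lemma Fit0_hasDerivAt (s : ℝ) : HasDerivAt (Fit D N 0) (D * Fit D N 0 s) s := by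
  show HasDerivAt (fun u : ℝ => exp (u • D)) (D * exp (s • D)) s
  rw [← exp_smul_comm]
  exact hasDerivAt_exp_smul_const D s

lemma Fit_supd {d : Fin m → ℂ} (hD : D = Matrix.diagonal d) (hN : SupD 1 N) (k : ℕ) (s : ℝ) :
    SupD k (Fit D N k s) := by
  induction k generalizing s with
  | zero =>
    show SupD 0 (exp (s • D))
    rw [hD, exp_smul_diagonal]
    exact SupD.diagonal _
  | succ k ih =>
    have hexp : ∀ u : ℝ, SupD 0 (exp (u • D)) := by
      intro u
      rw [hD, exp_smul_diagonal]
      exact SupD.diagonal _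
    have hint : SupD (k+1) (∫ u in (0:ℝ)..s, exp ((-u) • D) * N * Fit D N k u) := by
      intro i j hij
      have := ContinuousLinearMap.intervalIntegral_comp_comm (μ := MeasureTheory.volume)
        (entryCLM i j) ((Fit_integrand_continuous D N k).intervalIntegrable 0 s)
      rw [show ((∫ u in (0:ℝ)..s, exp ((-u) • D) * N * Fit D N k u) i j)
          = entryCLM i j (∫ u in (0:ℝ)..s, exp ((-u) • D) * N * Fit D N k u) from rfl, ← this]
      have hzero : ∀ u : ℝ, entryCLM i j (exp ((-u) • D) * N * Fit D N k u) = 0 := by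
        intro u
        have h1 : SupD (0 + 1 + k) (exp ((-u) • D) * N * Fit D N k u) :=
          ((hexp (-u)).mul hN).mul (ih u)
        exact h1 i j (by omega)
      simp only [hzero]
      simp
    have h2 : SupD (0 + (k+1)) (exp (s • D) *
        (∫ u in (0:ℝ)..s, exp ((-u) • D) * N * Fit D N k u)) := (hexp s).mul hint
    show SupD (k+1) (exp (s • D) * (∫ u in (0:ℝ)..s, exp ((-u) • D) * N * Fit D N k u))
    simpa using h2

lemma Fit_norm_le {d : Fin m → ℂ} (hD : D = Matrix.diagonal d) {α : ℝ}
    (hα : ∀ i, (d i).re ≤ α) (k : ℕ) :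
    ∀ s : ℝ, 0 ≤ s → ‖Fit D N k s‖ ≤ Real.exp (s * α) * (‖N‖ ^ k * s ^ k / (Nat.factorial k)) := by
  subst hD
  induction k with
  | zero =>
    intro s hs
    show ‖exp (s • Matrix.diagonal d)‖ ≤ _
    simpa using norm_exp_smul_diagonal_le s hs d hα
  | succ k ih =>
    intro s hs
    set C : ℝ := Real.exp (s * α) * ‖N‖ ^ (k+1) / (Nat.factorial k) with hCdef
    have hC : 0 ≤ C := by positivity
    have hg := Fit_integrand_continuous (Matrix.diagonal d) N k
    have hpull : Fit (Matrix.diagonal d) N (k+1) s =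
        ∫ u in (0:ℝ)..s, exp (s • Matrix.diagonal d) *
          (exp ((-u) • Matrix.diagonal d) * N * Fit (Matrix.diagonal d) N k u) := by
      have h := ContinuousLinearMap.intervalIntegral_comp_comm (μ := MeasureTheory.volume)
        (ContinuousLinearMap.mul ℝ (Matrix (Fin m) (Fin m) ℂ) (exp (s • Matrix.diagonal d)))
        (hg.intervalIntegrable 0 s)
      calc Fit (Matrix.diagonal d) N (k+1) s
          = (ContinuousLinearMap.mul ℝ (Matrix (Fin m) (Fin m) ℂ)
              (exp (s • Matrix.diagonal d)))
            (∫ u in (0:ℝ)..s, exp ((-u) • Matrix.diagonal d) * N *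
              Fit (Matrix.diagonal d) N k u) := rfl
        _ = _ := h.symm
    rw [hpull]
    have hCint : IntervalIntegrable (fun u : ℝ => C * u ^ k) MeasureTheory.volume 0 s :=
      (continuous_const.mul (continuous_pow k)).intervalIntegrable 0 s
    have hbound : ∀ u ∈ Set.uIoc (0:ℝ) s,
        ‖exp (s • Matrix.diagonal d) *
          (exp ((-u) • Matrix.diagonal d) * N * Fit (Matrix.diagonal d) N k u)‖ ≤ C * u ^ k := by
      intro u hu
      rw [Set.uIoc_of_le hs] at hu
      have hu0 : 0 ≤ u := le_of_lt hu.1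
      have hus : u ≤ s := hu.2
      have h1 : exp (s • Matrix.diagonal d) *
          (exp ((-u) • Matrix.diagonal d) * N * Fit (Matrix.diagonal d) N k u) =
          exp ((s - u) • Matrix.diagonal d) * N * Fit (Matrix.diagonal d) N k u := by
        simp only [← mul_assoc]
        rw [exp_smul_mul_exp_smul, ← sub_eq_add_neg]
      rw [h1]
      have hA := norm_exp_smul_diagonal_le (s - u) (by linarith) d hα
      have hB := ih u hu0
      calc ‖exp ((s - u) • Matrix.diagonal d) * N * Fit (Matrix.diagonal d) N k u‖
          ≤ ‖exp ((s - u) • Matrix.diagonal d)‖ * ‖N‖ * ‖Fit (Matrix.diagonal d) N k u‖ :=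
            le_trans (norm_mul_le _ _) (mul_le_mul_of_nonneg_right (norm_mul_le _ _)
              (norm_nonneg _))
        _ ≤ Real.exp ((s - u) * α) * ‖N‖ *
              (Real.exp (u * α) * (‖N‖ ^ k * u ^ k / (Nat.factorial k))) := by
            refine mul_le_mul (mul_le_mul_of_nonneg_right hA (norm_nonneg N)) hB
              (norm_nonneg _) (by positivity)
        _ = C * u ^ k := by
            rw [show Real.exp ((s - u) * α) * ‖N‖ *
                (Real.exp (u * α) * (‖N‖ ^ k * u ^ k / (Nat.factorial k))) =
                (Real.exp ((s - u) * α) * Real.exp (u * α)) * ((‖N‖ * ‖N‖ ^ k) * u ^ k /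
                  (Nat.factorial k)) from by ring]
            rw [← Real.exp_add, show (s - u) * α + u * α = s * α from by ring,
              show ‖N‖ * ‖N‖ ^ k = ‖N‖ ^ (k+1) from (pow_succ' ‖N‖ k).symm, hCdef]
            ring
    have hnorm := intervalIntegral.norm_integral_le_of_norm_le (μ := MeasureTheory.volume)
      (f := fun u => exp (s • Matrix.diagonal d) *
        (exp ((-u) • Matrix.diagonal d) * N * Fit (Matrix.diagonal d) N k u))
      (g := fun u => C * u ^ k) hs ?_ hCint
    · refine le_trans hnorm ?_
      rw [intervalIntegral.integral_const_mul, integral_pow]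
      have h0 : (0:ℝ) ^ (k+1) = 0 := zero_pow (Nat.succ_ne_zero k)
      rw [h0, sub_zero]
      rw [hCdef, Nat.factorial_succ]
      push_cast
      have hk1 : (0:ℝ) < (k:ℝ) + 1 := by positivity
      have hkf : (0:ℝ) < (Nat.factorial k : ℝ) := by positivity
      apply le_of_eq
      field_simp
    · exact Filter.Eventually.of_forall fun u hu => hbound u (by rw [Set.uIoc_of_le hs]; exact hu)

lemma Fit_zero_eq (k : ℕ) : Fit D N k 0 = if k = 0 then 1 else 0 := by
  cases k with
  | zero =>
    show exp ((0:ℝ) • D) = _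
    rw [zero_smul, NormedSpace.exp_zero, if_pos rfl]
  | succ k =>
    show exp ((0:ℝ) • D) * (∫ u in (0:ℝ)..(0:ℝ), _) = _
    rw [intervalIntegral.integral_same, mul_zero, if_neg (Nat.succ_ne_zero k)]

lemma exp_eq_sum_Fit (hm : 1 ≤ m) {d : Fin m → ℂ} (hD : D = Matrix.diagonal d)
    (hN : SupD 1 N) (t : ℝ) :
    exp (t • (D + N)) = ∑ k ∈ Finset.range m, Fit D N k t := by
  obtain ⟨n, rfl⟩ : ∃ n, m = n + 1 := ⟨m - 1, by omega⟩
  set T : Matrix (Fin (n+1)) (Fin (n+1)) ℂ := D + N with hTdef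
  set S : ℝ → Matrix (Fin (n+1)) (Fin (n+1)) ℂ :=
    fun s => ∑ k ∈ Finset.range (n+1), Fit D N k s with hSdef
  have hlast : ∀ s : ℝ, N * Fit D N n s = 0 := by
    intro s
    have h1 : SupD (1 + n) (N * Fit D N n s) := hN.mul (Fit_supd D N hD hN n s)
    exact h1.eq_zero (by omega)
  have hSderiv : ∀ s : ℝ, HasDerivAt S (T * S s) s := by
    intro s
    have h0 : HasDerivAt S (∑ k ∈ Finset.range (n+1),
        (D * Fit D N k s + if hk : k = 0 then 0 else N * Fit D N (k-1) s)) s := by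
      refine HasDerivAt.fun_sum fun k _ => ?_
      cases k with
      | zero => simpa using Fit0_hasDerivAt D N s
      | succ k => simpa using Fit_hasDerivAt D N k s
    have heq : (∑ k ∈ Finset.range (n+1),
        (D * Fit D N k s + if hk : k = 0 then 0 else N * Fit D N (k-1) s)) = T * S s := by
      rw [Finset.sum_add_distrib]
      have hd : ∑ k ∈ Finset.range (n+1), D * Fit D N k s = D * S s := by
        rw [hSdef, Finset.mul_sum]
      have hn2 : (∑ k ∈ Finset.range (n+1),
          (if hk : k = 0 then (0 : Matrix (Fin (n+1)) (Fin (n+1)) ℂ)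
            else N * Fit D N (k-1) s)) = N * S s := by
        rw [Finset.sum_range_succ']
        simp only [Nat.add_sub_cancel]
        have hc : (∑ k ∈ Finset.range n,
            (if hk : k + 1 = 0 then (0 : Matrix (Fin (n+1)) (Fin (n+1)) ℂ)
              else N * Fit D N k s)) = ∑ k ∈ Finset.range n, N * Fit D N k s :=
          Finset.sum_congr rfl fun k _ => dif_neg (Nat.succ_ne_zero k)
        rw [hc, dif_pos trivial, add_zero, hSdef, Finset.mul_sum, Finset.sum_range_succ,
          hlast s, add_zero]
      rw [hd, hn2, hTdef, add_mul]
    rw [← heq]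
    exact h0
  set ψ : ℝ → Matrix (Fin (n+1)) (Fin (n+1)) ℂ :=
    fun s => exp ((t - s) • T) * S s with hψdef
  have hψderiv : ∀ s : ℝ, HasDerivAt ψ 0 s := by
    intro s
    have hE : HasDerivAt (fun s : ℝ => exp ((t - s) • T))
        ((-1 : ℝ) • (exp ((t - s) • T) * T)) s := by
      exact HasDerivAt.scomp s (hasDerivAt_exp_smul_const T (t - s))
        ((hasDerivAt_id s).const_sub t)
    have hmul := hE.mul (hSderiv s)
    have : (-1 : ℝ) • (exp ((t - s) • T) * T) * S s +
        exp ((t - s) • T) * (T * S s) = 0 := by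
      rw [neg_one_smul, neg_mul, mul_assoc, ← mul_assoc, neg_add_cancel]
    rw [← this]
    exact hmul
  have hconst : ψ t = ψ 0 :=
    is_const_of_deriv_eq_zero (fun s => (hψderiv s).differentiableAt)
      (fun s => (hψderiv s).deriv) t 0
  have hψt : ψ t = S t := by
    rw [hψdef]
    simp only [sub_self, zero_smul, NormedSpace.exp_zero, one_mul]
  have hS0 : S 0 = 1 := by
    rw [hSdef]
    simp only [Fit_zero_eq]
    rw [Finset.sum_ite_eq' (Finset.range (n+1)) 0 (fun _ => (1:Matrix (Fin (n+1)) (Fin (n+1)) ℂ))]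
    simp
  have hψ0 : ψ 0 = exp (t • T) := by
    rw [hψdef]
    simp only [sub_zero, hS0, mul_one]
  show exp (t • T) = S t
  exact (hψt.symm.trans (hconst.trans hψ0)).symm

end ShilovAux


section Final
open scoped Matrix.Norms.L2Operator ENNReal NNReal
open ShilovAux
open NormedSpace (exp)

lemma unitary_norm_one {m : ℕ} (hm : 1 ≤ m) {U : Matrix (Fin m) (Fin m) ℂ}
    (hU : U ∈ Matrix.unitaryGroup (Fin m) ℂ) : ‖U‖ = 1 := by
  haveI : Nonempty (Fin m) := ⟨⟨0, by omega⟩⟩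
  have h := Matrix.l2_opNorm_conjTranspose_mul_self U
  rw [← Matrix.star_eq_conjTranspose, Matrix.mem_unitaryGroup_iff'.mp hU] at h
  have h1 : ‖(1 : Matrix (Fin m) (Fin m) ℂ)‖ = 1 := norm_one
  rw [h1] at h
  rcases mul_self_eq_one_iff.mp h.symm with h' | h'
  · exact h'
  · exfalso; have := norm_nonneg U; rw [h'] at this; linarith

lemma unitary_conj_l2_norm {m : ℕ} (hm : 1 ≤ m) {U : Matrix (Fin m) (Fin m) ℂ}
    (hU : U ∈ Matrix.unitaryGroup (Fin m) ℂ) (X : Matrix (Fin m) (Fin m) ℂ) :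
    ‖U * X * star U‖ = ‖X‖ := by
  have h1 := unitary_norm_one hm hU
  have h2 : ‖star U‖ = 1 := by
    rw [Matrix.star_eq_conjTranspose, Matrix.l2_opNorm_conjTranspose]; exact h1
  apply le_antisymm
  · calc ‖U * X * star U‖ ≤ ‖U * X‖ * ‖star U‖ := Matrix.l2_opNorm_mul _ _
      _ ≤ ‖U‖ * ‖X‖ * ‖star U‖ :=
        mul_le_mul_of_nonneg_right (Matrix.l2_opNorm_mul _ _) (norm_nonneg _)
      _ = ‖X‖ := by rw [h1, h2]; ring
  · have hX : X = star U * (U * X * star U) * U := by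
      calc X = 1 * X * 1 := by rw [Matrix.one_mul, Matrix.mul_one]
        _ = (star U * U) * X * (star U * U) := by rw [Matrix.mem_unitaryGroup_iff'.mp hU]
        _ = star U * (U * X * star U) * U := by simp only [Matrix.mul_assoc]
    calc ‖X‖ = ‖star U * (U * X * star U) * U‖ := by rw [← hX]
      _ ≤ ‖star U * (U * X * star U)‖ * ‖U‖ := Matrix.l2_opNorm_mul _ _
      _ ≤ ‖star U‖ * ‖U * X * star U‖ * ‖U‖ :=
        mul_le_mul_of_nonneg_right (Matrix.l2_opNorm_mul _ _) (norm_nonneg _)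
      _ = ‖U * X * star U‖ := by rw [h1, h2]; ring

/-- **Shilov's inequality** -/
theorem shilov_inequality (m : ℕ) (hm : 1 ≤ m)
    (A : Matrix (Fin m) (Fin m) ℂ) (t : ℝ) (ht : 0 ≤ t) :
    ‖NormedSpace.exp (t • A)‖ ≤
      (spectralRadius ℂ (NormedSpace.exp (t • A))).toReal *
        (1 + ∑ k ∈ Finset.Icc 1 (m - 1), (2 * t) ^ k / (Nat.factorial k) * ‖A‖ ^ k) := by
  haveI : Nonempty (Fin m) := ⟨⟨0, by omega⟩⟩
  obtain ⟨U, hU, T, hA, hTtri⟩ := schur_matrix m A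
  set d : Fin m → ℂ := fun i => T i i with hd
  set D : Matrix (Fin m) (Fin m) ℂ := Matrix.diagonal d with hD
  set N : Matrix (Fin m) (Fin m) ℂ := T - D with hNdef
  have hDN : D + N = T := by rw [hNdef]; abel
  have hN : SupD 1 N := by
    intro i j hij
    rw [hNdef, Matrix.sub_apply]
    by_cases h : (j : ℕ) < (i : ℕ)
    · rw [hTtri (show (id j : Fin m) < id i from h), hD,
        Matrix.diagonal_apply_ne _ (fun hc => by rw [hc] at h; omega), sub_zero]
    · have hije : i = j := Fin.ext (by omega)
      subst hije
      rw [hD, Matrix.diagonal_apply_eq, hd, sub_self]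
  set α : ℝ := Finset.univ.sup' Finset.univ_nonempty (fun i => (d i).re) with hαdef
  have hα : ∀ i, (d i).re ≤ α := fun i => Finset.le_sup' (fun i => (d i).re) (Finset.mem_univ i)
  obtain ⟨i₀, -, hi₀⟩ := Finset.exists_mem_eq_sup' Finset.univ_nonempty (fun i => (d i).re)
  have h1 : U * star U = 1 := Matrix.mem_unitaryGroup_iff.mp hU
  have h2 : star U * U = 1 := Matrix.mem_unitaryGroup_iff'.mp hU
  set u : (Matrix (Fin m) (Fin m) ℂ)ˣ := ⟨U, star U, h1, h2⟩ with hu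
  have hexpA : NormedSpace.exp (t • A) =
      (↑u : Matrix (Fin m) (Fin m) ℂ) * exp (t • T) * (↑u⁻¹ : Matrix (Fin m) (Fin m) ℂ) := by
    have hsmul : t • A =
        (↑u : Matrix (Fin m) (Fin m) ℂ) * (t • T) * (↑u⁻¹ : Matrix (Fin m) (Fin m) ℂ) := by
      show t • A = U * (t • T) * star U
      rw [hA, Matrix.mul_smul, Matrix.smul_mul]
    rw [hsmul, NormedSpace.exp_units_conj]
  have hexpT : exp (t • T) = ∑ k ∈ Finset.range m, Fit D N k t := by
    rw [← hDN]
    exact exp_eq_sum_Fit D N hm hD hN t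
  -- diagonal entries of exp (t • T)
  have hdiag : ∀ i, (exp (t • T)) i i = Complex.exp (t * d i) := by
    intro i
    rw [hexpT]
    rw [show (∑ k ∈ Finset.range m, Fit D N k t) i i
        = ∑ k ∈ Finset.range m, (Fit D N k t) i i from by
      rw [Matrix.sum_apply]]
    have hz : ∀ k ∈ Finset.range m, k ≠ 0 → (Fit D N k t) i i = 0 := by
      intro k _ hk
      exact Fit_supd D N hD hN k t i i (by omega)
    rw [Finset.sum_eq_single 0 (fun k hk hkn => hz k hk hkn)
      (fun h => absurd (Finset.mem_range.mpr (by omega)) h)]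
    show (exp (t • D)) i i = _
    rw [hD, exp_smul_diagonal, Matrix.diagonal_apply_eq]
  -- triangularity of exp (t • T)
  have htri : (exp (t • T)).BlockTriangular (id : Fin m → Fin m) := by
    intro i j hij
    rw [hexpT]
    rw [show (∑ k ∈ Finset.range m, Fit D N k t) i j
        = ∑ k ∈ Finset.range m, (Fit D N k t) i j from by
      rw [Matrix.sum_apply]]
    refine Finset.sum_eq_zero fun k _ => ?_
    exact (Fit_supd D N hD hN k t).mono (Nat.zero_le k) i j
      (by simpa using (show (j : ℕ) < (i : ℕ) from hij))
  -- spectrum membership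
  set μ : ℂ := Complex.exp (t * d i₀) with hμ
  have hspec : μ ∈ spectrum ℂ (NormedSpace.exp (t • A)) := by
    rw [hexpA, spectrum.units_conjugate, spectrum.mem_iff]
    intro hunit
    have hdet := (Matrix.isUnit_iff_isUnit_det _).mp hunit
    set Y := algebraMap ℂ (Matrix (Fin m) (Fin m) ℂ) μ - exp (t • T) with hY
    have hYtri : Y.BlockTriangular (id : Fin m → Fin m) := by
      refine Matrix.BlockTriangular.sub ?_ htri
      rw [show algebraMap ℂ (Matrix (Fin m) (Fin m) ℂ) μ
          = Matrix.diagonal (fun _ => μ) from by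
        rw [Matrix.algebraMap_eq_diagonal]; rfl]
      exact Matrix.blockTriangular_diagonal _
    have hdet0 : Y.det = 0 := by
      rw [Matrix.det_of_upperTriangular hYtri]
      refine Finset.prod_eq_zero (Finset.mem_univ i₀) ?_
      rw [hY, Matrix.sub_apply, hdiag i₀, show algebraMap ℂ (Matrix (Fin m) (Fin m) ℂ) μ i₀ i₀
          = μ from by rw [Matrix.algebraMap_eq_diagonal]; exact Matrix.diagonal_apply_eq _ i₀]
      rw [hμ, sub_self]
    rw [hdet0] at hdet
    exact (by simpa using hdet : ¬ True) trivial
  -- spectral radius lower bound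
  have hμnorm : ‖μ‖ = Real.exp (t * α) := by
    rw [hμ, Complex.norm_exp]
    congr 1
    have : ((t : ℂ) * d i₀).re = t * (d i₀).re := by simp [Complex.mul_re]
    rw [this, hαdef, hi₀]
  have hρfin : spectralRadius ℂ (NormedSpace.exp (t • A)) ≠ ⊤ :=
    ne_top_of_le_ne_top ENNReal.coe_ne_top
      (spectrum.spectralRadius_le_nnnorm (NormedSpace.exp (t • A)))
  have hρ : Real.exp (t * α) ≤ (spectralRadius ℂ (NormedSpace.exp (t • A))).toReal := by
    have hle : (‖μ‖₊ : ℝ≥0∞) ≤ spectralRadius ℂ (NormedSpace.exp (t • A)) :=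
      le_iSup₂ (f := fun k (_ : k ∈ spectrum ℂ (NormedSpace.exp (t • A))) => (‖k‖₊ : ℝ≥0∞))
        μ hspec
    have := ENNReal.toReal_mono hρfin hle
    rwa [ENNReal.coe_toReal, coe_nnnorm, hμnorm] at this
  -- norm bounds
  have hTA : ‖T‖ = ‖A‖ := by
    rw [hA, unitary_conj_l2_norm hm hU]
  have hDT : ‖D‖ ≤ ‖T‖ := by
    rw [hD]
    exact l2_norm_diagonal_le d (norm_nonneg T) (fun i => entry_le_l2_norm T i i)
  have hNA : ‖N‖ ≤ 2 * ‖A‖ := by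
    rw [hNdef]
    calc ‖T - D‖ ≤ ‖T‖ + ‖D‖ := norm_sub_le _ _
      _ ≤ ‖T‖ + ‖T‖ := by linarith
      _ = 2 * ‖A‖ := by rw [hTA]; ring
  have hnormA : ‖NormedSpace.exp (t • A)‖ = ‖exp (t • T)‖ := by
    rw [hexpA]
    exact unitary_conj_l2_norm hm hU _
  have hsum : ‖exp (t • T)‖ ≤
      ∑ k ∈ Finset.range m, Real.exp (t * α) * (‖N‖ ^ k * t ^ k / (Nat.factorial k)) := by
    rw [hexpT]
    refine le_trans (norm_sum_le _ _) (Finset.sum_le_sum fun k _ => ?_)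
    exact Fit_norm_le D N hD hα k t ht
  have hAnonneg : (0:ℝ) ≤ ‖A‖ := norm_nonneg A
  have hstep : ∑ k ∈ Finset.range m, Real.exp (t * α) * (‖N‖ ^ k * t ^ k / (Nat.factorial k)) ≤
      Real.exp (t * α) * ∑ k ∈ Finset.range m, (2 * t) ^ k / (Nat.factorial k) * ‖A‖ ^ k := by
    rw [Finset.mul_sum]
    refine Finset.sum_le_sum fun k _ => ?_
    refine mul_le_mul_of_nonneg_left ?_ (Real.exp_nonneg _)
    have hNk : ‖N‖ ^ k ≤ (2 * ‖A‖) ^ k := pow_le_pow_left₀ (norm_nonneg N) hNA k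
    calc ‖N‖ ^ k * t ^ k / (Nat.factorial k)
        ≤ (2 * ‖A‖) ^ k * t ^ k / (Nat.factorial k) := by
          exact div_le_div_of_nonneg_right
            (mul_le_mul_of_nonneg_right hNk (pow_nonneg ht k)) (by positivity)
      _ = (2 * t) ^ k / (Nat.factorial k) * ‖A‖ ^ k := by ring
  have hsplit : ∑ k ∈ Finset.range m, (2 * t) ^ k / (Nat.factorial k) * ‖A‖ ^ k =
      1 + ∑ k ∈ Finset.Icc 1 (m - 1), (2 * t) ^ k / (Nat.factorial k) * ‖A‖ ^ k := by
    have hr : Finset.range m = insert 0 (Finset.Icc 1 (m - 1)) := by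
      ext x
      simp only [Finset.mem_range, Finset.mem_insert, Finset.mem_Icc]
      omega
    rw [hr, Finset.sum_insert (by simp)]
    simp
  have hsumnn : (0:ℝ) ≤ 1 + ∑ k ∈ Finset.Icc 1 (m - 1),
      (2 * t) ^ k / (Nat.factorial k) * ‖A‖ ^ k := by
    have : (0:ℝ) ≤ ∑ k ∈ Finset.Icc 1 (m - 1), (2 * t) ^ k / (Nat.factorial k) * ‖A‖ ^ k :=
      Finset.sum_nonneg fun k _ => by positivity
    linarith
  calc ‖NormedSpace.exp (t • A)‖ = ‖exp (t • T)‖ := hnormA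
    _ ≤ ∑ k ∈ Finset.range m, Real.exp (t * α) * (‖N‖ ^ k * t ^ k / (Nat.factorial k)) := hsum
    _ ≤ Real.exp (t * α) * ∑ k ∈ Finset.range m, (2 * t) ^ k / (Nat.factorial k) * ‖A‖ ^ k :=
        hstep
    _ = Real.exp (t * α) * (1 + ∑ k ∈ Finset.Icc 1 (m - 1),
          (2 * t) ^ k / (Nat.factorial k) * ‖A‖ ^ k) := by rw [hsplit]
    _ ≤ (spectralRadius ℂ (NormedSpace.exp (t • A))).toReal *
          (1 + ∑ k ∈ Finset.Icc 1 (m - 1), (2 * t) ^ k / (Nat.factorial k) * ‖A‖ ^ k) :=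
        mul_le_mul_of_nonneg_right hρ hsumnn

end Final
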